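/- Fix σ_a ∈ ℝ with 0 < σ_a² < 1, let f(x) = (√(1−x²) + (π − arccos x)·x)/π, let g : [−1,1] → [−1,1] send t to the unique fixed point of x = σ_a²·f(x) + (1−σ_a²)·t, set ∠* = g(0), let h(x) = x/(1 − σ_a²·(π − arccos x)/π), and define k = h ∘ g. Then k is twice differentiable at 0 with k″(0) = (1−σ_a²)²·( h″(∠*) − σ_a²·f′(∠*)·h″(∠*) + σ_a²·h′(∠*)·f″(∠*) ) / (1 − σ_a²·f′(∠*))³, where f′(x) = (π − arccos x)/π and f″(x) = 1/(π·√(1−x²)). -/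

import Mathlib

open Real Set
open Filter Topology

/-- The dual kernel of the normalized ReLU activation `φ(x) = √2·max(x,0)`. -/
noncomputable def fDual (x : ℝ) : ℝ :=
  (Real.sqrt (1 - x ^ 2) + (Real.pi - Real.arccos x) * x) / Real.pi

/-- The derivative `f′(x) = (π − arccos x)/π` of the dual kernel. -/
noncomputable def fDual' (x : ℝ) : ℝ := (Real.pi - Real.arccos x) / Real.pi

/-- The second derivative `f″(x) = 1/(π·√(1−x²))` of the dual kernel. -/
noncomputable def fDual'' (x : ℝ) : ℝ := 1 / (Real.pi * Real.sqrt (1 - x ^ 2))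

/-- The map `h(x) = x/(1 − σa²·(π − arccos x)/π)` defining the Implicit-NTK. -/
noncomputable def hNTK (σa x : ℝ) : ℝ :=
  x / (1 - σa ^ 2 * (Real.pi - Real.arccos x) / Real.pi)


noncomputable def Dk (σa x : ℝ) : ℝ := 1 - σa ^ 2 * fDual' x
noncomputable def H1 (σa x : ℝ) : ℝ :=
  (Dk σa x + x * (σa ^ 2 * fDual'' x)) / (Dk σa x) ^ 2

lemma sub_sq_pos {x : ℝ} (h1 : -1 < x) (h2 : x < 1) : 0 < 1 - x ^ 2 := by nlinarith

lemma sqrt_ne {x : ℝ} (h1 : -1 < x) (h2 : x < 1) : Real.sqrt (1 - x ^ 2) ≠ 0 :=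
  (Real.sqrt_pos.mpr (sub_sq_pos h1 h2)).ne'

lemma hasDerivAt_fDual {x : ℝ} (h1 : -1 < x) (h2 : x < 1) :
    HasDerivAt fDual (fDual' x) x := by
  have hu := sub_sq_pos h1 h2
  have hs := sqrt_ne h1 h2
  have ha := Real.hasDerivAt_arccos h1.ne' h2.ne
  have hq : HasDerivAt (fun y : ℝ => 1 - y ^ 2) (-(2 * x)) x := by
    simpa using (hasDerivAt_pow 2 x).const_sub 1
  have hsq := hq.sqrt hu.ne'
  have hmul : HasDerivAt (fun y => (Real.pi - Real.arccos y) * y)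
      ((1 / Real.sqrt (1 - x ^ 2)) * x + (Real.pi - Real.arccos x) * 1) x := by
    have := (ha.const_sub Real.pi).mul (hasDerivAt_id x)
    simpa [Pi.mul_def] using this
  have h := (hsq.add hmul).div_const Real.pi
  have hfun : fDual = fun y => (Real.sqrt (1 - y ^ 2) + (Real.pi - Real.arccos y) * y) / Real.pi := rfl
  rw [hfun]
  refine h.congr_deriv ?_
  unfold fDual'
  field_simp
  ring

lemma hasDerivAt_fDual' {x : ℝ} (h1 : -1 < x) (h2 : x < 1) :
    HasDerivAt fDual' (fDual'' x) x := by
  have hs := sqrt_ne h1 h2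
  have ha := Real.hasDerivAt_arccos h1.ne' h2.ne
  have h := (ha.const_sub Real.pi).div_const Real.pi
  refine h.congr_deriv ?_
  unfold fDual''
  field_simp

lemma hasDerivAt_fDual'' {x : ℝ} (h1 : -1 < x) (h2 : x < 1) :
    HasDerivAt fDual'' (x / (Real.pi * Real.sqrt (1 - x ^ 2) * (1 - x ^ 2))) x := by
  have hu := sub_sq_pos h1 h2
  have hs := sqrt_ne h1 h2
  have hq : HasDerivAt (fun y : ℝ => 1 - y ^ 2) (-(2 * x)) x := by
    simpa using (hasDerivAt_pow 2 x).const_sub 1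
  have hsq := hq.sqrt hu.ne'
  have hden : HasDerivAt (fun y => Real.pi * Real.sqrt (1 - y ^ 2))
      (Real.pi * (-(2 * x) / (2 * Real.sqrt (1 - x ^ 2)))) x := hsq.const_mul Real.pi
  have hdne : Real.pi * Real.sqrt (1 - x ^ 2) ≠ 0 :=
    mul_ne_zero Real.pi_ne_zero hs
  have h := (hasDerivAt_const x (1:ℝ)).div hden hdne
  refine h.congr_deriv ?_
  have hsq2 : Real.sqrt (1 - x ^ 2) ^ 2 = 1 - x ^ 2 := Real.sq_sqrt hu.le
  field_simp
  linear_combination (-x) * hsq2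

lemma fDual'_nonneg (x : ℝ) : 0 ≤ fDual' x :=
  div_nonneg (by linarith [Real.arccos_le_pi x]) Real.pi_pos.le

lemma fDual'_le_one (x : ℝ) : fDual' x ≤ 1 := by
  rw [fDual', div_le_one Real.pi_pos]
  linarith [Real.arccos_nonneg x]

lemma Dk_pos {σa : ℝ} (hσ1 : σa ^ 2 < 1) (x : ℝ) : 0 < Dk σa x := by
  have h0 : (0:ℝ) ≤ σa ^ 2 := sq_nonneg σa
  have := fDual'_nonneg x
  have := fDual'_le_one x
  have : σa ^ 2 * fDual' x ≤ σa ^ 2 * 1 := by nlinarith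
  unfold Dk; nlinarith

lemma hNTK_eq (σa : ℝ) : hNTK σa = fun x => x / Dk σa x := by
  funext x
  unfold hNTK Dk fDual'
  ring_nf

lemma hasDerivAt_hNTK {σa x : ℝ} (hσ1 : σa ^ 2 < 1) (h1 : -1 < x) (h2 : x < 1) :
    HasDerivAt (hNTK σa) (H1 σa x) x := by
  have hDd : HasDerivAt (Dk σa) (-(σa ^ 2 * fDual'' x)) x := by
    have := ((hasDerivAt_fDual' h1 h2).const_mul (σa ^ 2)).const_sub 1
    exact this
  have h := (hasDerivAt_id x).div hDd (Dk_pos hσ1 x).ne'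
  rw [hNTK_eq]
  refine h.congr_deriv ?_
  unfold H1
  field_simp
  simp only [id]
  ring

lemma continuous_fDual : Continuous fDual := by
  unfold fDual
  exact ((Real.continuous_sqrt.comp (by continuity)).add
    ((continuous_const.sub Real.continuous_arccos).mul continuous_id)).div_const _

lemma fDual_mono : MonotoneOn fDual (Icc (-1 : ℝ) 1) := by
  apply monotoneOn_of_deriv_nonneg (convex_Icc _ _) continuous_fDual.continuousOn
  · rw [interior_Icc]
    exact fun x hx => ((hasDerivAt_fDual hx.1 hx.2).differentiableAt).differentiableWithinAt
  · rw [interior_Icc]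
    intro x hx
    rw [(hasDerivAt_fDual hx.1 hx.2).deriv]
    exact fDual'_nonneg x

lemma fDual_neg_one : fDual (-1) = 0 := by
  unfold fDual
  rw [Real.arccos_neg_one]
  norm_num

lemma fDual_one : fDual 1 = 1 := by
  unfold fDual
  rw [Real.arccos_one]
  norm_num

lemma fDual_mem {x : ℝ} (hx : x ∈ Icc (-1 : ℝ) 1) : fDual x ∈ Icc (0 : ℝ) 1 := by
  constructor
  · have := fDual_mono (left_mem_Icc.mpr (by norm_num)) hx hx.1
    rwa [fDual_neg_one] at this
  · have := fDual_mono hx (right_mem_Icc.mpr (by norm_num)) hx.2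
    rwa [fDual_one] at this

theorem stmt_12 (σa : ℝ) (hσ0 : 0 < σa ^ 2) (hσ1 : σa ^ 2 < 1)
    (g : ℝ → ℝ)
    (hg : ∀ t ∈ Set.Icc (-1 : ℝ) 1,
      g t ∈ Set.Icc (-1 : ℝ) 1 ∧ g t = σa ^ 2 * fDual (g t) + (1 - σa ^ 2) * t) :
    HasDerivAt (deriv (hNTK σa ∘ g))
      ((1 - σa ^ 2) ^ 2 *
          (deriv (deriv (hNTK σa)) (g 0)
            - σa ^ 2 * fDual' (g 0) * deriv (deriv (hNTK σa)) (g 0)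
            + σa ^ 2 * deriv (hNTK σa) (g 0) * fDual'' (g 0))
        / (1 - σa ^ 2 * fDual' (g 0)) ^ 3) 0 := by
  have hπ := Real.pi_pos
  have hσnn : (0:ℝ) ≤ σa ^ 2 := sq_nonneg σa
  have hσpos : (0:ℝ) < 1 - σa ^ 2 := by linarith
  have hσne : (1:ℝ) - σa ^ 2 ≠ 0 := hσpos.ne'
  -- bounds for g on J = Icc (-1/2) (1/2)
  have hgbd : ∀ t ∈ Icc (-(1:ℝ)/2) (1/2),
      (1 - σa ^ 2) * t ≤ g t ∧ g t ≤ σa ^ 2 + (1 - σa ^ 2) * t := by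
    intro t ht
    have ht' : t ∈ Icc (-1:ℝ) 1 := ⟨by linarith [ht.1], by linarith [ht.2]⟩
    obtain ⟨hmem, heq⟩ := hg t ht'
    have hf := fDual_mem hmem
    constructor <;> nlinarith [hf.1, hf.2]
  have hgIoo : ∀ t ∈ Ioo (-(1:ℝ)/2) (1/2), -1 < g t ∧ g t < 1 := by
    intro t ht
    have hb := hgbd t ⟨ht.1.le, ht.2.le⟩
    have h1 := ht.1
    have h2 := ht.2
    constructor
    · nlinarith [hb.1, mul_lt_mul_of_pos_left h1 hσpos]
    · nlinarith [hb.2, mul_lt_mul_of_pos_left h2 hσpos]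
  -- Lipschitz bound for fDual on Icc (-c) c with c = (1+σa^2)/2
  set c : ℝ := (1 + σa ^ 2) / 2 with hc
  have hc1 : c < 1 := by rw [hc]; linarith
  have hc0 : -1 < -c := by rw [hc]; linarith
  have hgc : ∀ t ∈ Icc (-(1:ℝ)/2) (1/2), g t ∈ Icc (-c) c := by
    intro t ht
    have hb := hgbd t ht
    have h1 := ht.1
    have h2 := ht.2
    constructor
    · rw [hc]; nlinarith [hb.1, mul_le_mul_of_nonneg_left h1 hσpos.le]
    · rw [hc]; nlinarith [hb.2, mul_le_mul_of_nonneg_left h2 hσpos.le]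
  have hflip : ∀ x ∈ Icc (-c) c, ∀ y ∈ Icc (-c) c, |fDual y - fDual x| ≤ |y - x| := by
    intro x hx y hy
    have h := Convex.norm_image_sub_le_of_norm_hasDerivWithin_le (f := fDual) (f' := fDual')
      (C := 1) (s := Icc (-c) c)
      (fun z hz => (hasDerivAt_fDual (lt_of_lt_of_le hc0 hz.1)
        (lt_of_le_of_lt hz.2 hc1)).hasDerivWithinAt)
      (fun z _ => by
        rw [Real.norm_eq_abs, abs_of_nonneg (fDual'_nonneg z)]
        exact fDual'_le_one z)
      (convex_Icc _ _) hx hy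
    simpa [Real.norm_eq_abs] using h
  -- g is 1-Lipschitz on J
  have hglip : ∀ t ∈ Icc (-(1:ℝ)/2) (1/2), ∀ s ∈ Icc (-(1:ℝ)/2) (1/2),
      |g t - g s| ≤ |t - s| := by
    intro t ht s hs
    have ht' : t ∈ Icc (-1:ℝ) 1 := ⟨by linarith [ht.1], by linarith [ht.2]⟩
    have hs' : s ∈ Icc (-1:ℝ) 1 := ⟨by linarith [hs.1], by linarith [hs.2]⟩
    have hkey : g t - g s = σa ^ 2 * (fDual (g t) - fDual (g s)) + (1 - σa ^ 2) * (t - s) := by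
      linear_combination (hg t ht').2 - (hg s hs').2
    have hf := hflip (g s) (hgc s hs) (g t) (hgc t ht)
    have habs : |g t - g s| ≤ σa ^ 2 * |g t - g s| + (1 - σa ^ 2) * |t - s| := by
      calc |g t - g s| = |σa ^ 2 * (fDual (g t) - fDual (g s)) + (1 - σa ^ 2) * (t - s)| := by
            rw [hkey]
        _ ≤ |σa ^ 2 * (fDual (g t) - fDual (g s))| + |(1 - σa ^ 2) * (t - s)| := abs_add_le _ _
        _ = σa ^ 2 * |fDual (g t) - fDual (g s)| + (1 - σa ^ 2) * |t - s| := by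
            rw [abs_mul, abs_mul, abs_of_nonneg hσnn, abs_of_nonneg hσpos.le]
        _ ≤ σa ^ 2 * |g t - g s| + (1 - σa ^ 2) * |t - s| := by nlinarith [hf]
    nlinarith [habs]
  have hgcont : ContinuousOn g (Icc (-(1:ℝ)/2) (1/2)) := by
    have : LipschitzOnWith 1 g (Icc (-(1:ℝ)/2) (1/2)) :=
      LipschitzOnWith.of_dist_le_mul (fun x hx y hy => by
        rw [Real.dist_eq, Real.dist_eq]
        simpa using hglip x hx y hy)
    exact this.continuousOn
  -- derivative of g
  have hgderiv : ∀ t ∈ Ioo (-(1:ℝ)/2) (1/2),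
      HasDerivAt g ((Dk σa (g t) / (1 - σa ^ 2))⁻¹) t := by
    intro t ht
    have hgt := hgIoo t ht
    have hF2 : HasDerivAt (fun x => (x - σa ^ 2 * fDual x) / (1 - σa ^ 2))
        (Dk σa (g t) / (1 - σa ^ 2)) (g t) := by
      have := ((hasDerivAt_id (g t)).sub
        ((hasDerivAt_fDual hgt.1 hgt.2).const_mul (σa ^ 2))).div_const (1 - σa ^ 2)
      exact this
    have hne : Dk σa (g t) / (1 - σa ^ 2) ≠ 0 := div_ne_zero (Dk_pos hσ1 _).ne' hσne
    have hct : ContinuousAt g t := hgcont.continuousAt (Icc_mem_nhds ht.1 ht.2)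
    have hev : ∀ᶠ s in 𝓝 t, (fun x => (x - σa ^ 2 * fDual x) / (1 - σa ^ 2)) (g s) = s := by
      filter_upwards [Icc_mem_nhds ht.1 ht.2] with s hs
      have hs' : s ∈ Icc (-1:ℝ) 1 := ⟨by linarith [hs.1], by linarith [hs.2]⟩
      have heq := (hg s hs').2
      field_simp
      linarith [heq]
    exact HasDerivAt.of_local_left_inverse hct hF2 hne hev
  have hmem0 : (0:ℝ) ∈ Ioo (-(1:ℝ)/2) (1/2) := by norm_num
  have hgd0 := hgderiv 0 hmem0
  have hg0 := hgIoo 0 hmem0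
  -- first derivative of the composition near 0
  have hevd : deriv (hNTK σa ∘ g) =ᶠ[𝓝 (0:ℝ)]
      fun t => H1 σa (g t) * (Dk σa (g t) / (1 - σa ^ 2))⁻¹ := by
    filter_upwards [Ioo_mem_nhds hmem0.1 hmem0.2] with t ht
    have hgt := hgIoo t ht
    exact ((hasDerivAt_hNTK hσ1 hgt.1 hgt.2).comp t (hgderiv t ht)).deriv
  set x0 := g 0 with hx0
  -- second derivative pieces at x0
  have hDd : HasDerivAt (Dk σa) (-(σa ^ 2 * fDual'' x0)) x0 := by
    have := ((hasDerivAt_fDual' hg0.1 hg0.2).const_mul (σa ^ 2)).const_sub 1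
    exact this
  obtain ⟨V2, hH1d⟩ : ∃ v, HasDerivAt
      (fun y => (Dk σa y + y * (σa ^ 2 * fDual'' y)) / (Dk σa y) ^ 2) v x0 :=
    ⟨_, HasDerivAt.div
      (hDd.add ((hasDerivAt_id x0).mul
        ((hasDerivAt_fDual'' hg0.1 hg0.2).const_mul (σa ^ 2))))
      (hDd.pow 2) (pow_ne_zero 2 (Dk_pos hσ1 x0).ne')⟩
  have hH1d' : HasDerivAt (H1 σa) V2 x0 := hH1d
  have hevh : deriv (hNTK σa) =ᶠ[𝓝 x0] H1 σa := by
    filter_upwards [Ioo_mem_nhds hg0.1 hg0.2] with y hy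
    exact (hasDerivAt_hNTK hσ1 hy.1 hy.2).deriv
  have hD2 : HasDerivAt (deriv (hNTK σa)) V2 x0 := hH1d'.congr_of_eventuallyEq hevh
  have e2 : deriv (deriv (hNTK σa)) x0 = V2 := hD2.deriv
  have e1 : deriv (hNTK σa) x0 = H1 σa x0 := (hasDerivAt_hNTK hσ1 hg0.1 hg0.2).deriv
  -- assemble second derivative of the composition at 0
  have hH1g : HasDerivAt (fun t => H1 σa (g t)) (V2 * (Dk σa x0 / (1 - σa ^ 2))⁻¹) 0 := by
    have := hH1d'.comp 0 hgd0
    exact this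
  have hDg : HasDerivAt (fun t => Dk σa (g t))
      (-(σa ^ 2 * fDual'' x0) * (Dk σa x0 / (1 - σa ^ 2))⁻¹) 0 := by
    have := hDd.comp 0 hgd0
    exact this
  have hinv : HasDerivAt (fun t => (Dk σa (g t) / (1 - σa ^ 2))⁻¹)
      (-((-(σa ^ 2 * fDual'' x0) * (Dk σa x0 / (1 - σa ^ 2))⁻¹) / (1 - σa ^ 2))
        / (Dk σa x0 / (1 - σa ^ 2)) ^ 2) 0 :=
    (hDg.div_const (1 - σa ^ 2)).inv (div_ne_zero (Dk_pos hσ1 x0).ne' hσne)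
  have hK1 := hH1g.mul hinv
  have hfinal := hK1.congr_of_eventuallyEq hevd
  refine hfinal.congr_deriv ?_
  rw [e1, e2]
  have hDne : 1 - σa ^ 2 * fDual' x0 ≠ 0 := (Dk_pos hσ1 x0).ne'
  rw [← hx0]
  simp only [Dk]
  field_simp
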